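/- Per-user optimality at Nash equilibrium: if m* is a Nash equilibrium of the game induced by the mechanism and the users' payoffs, then each user maximizes its aggregate utility at its equilibrium allocation, given its equilibrium personalized prices: for every i ∈ N and every ā : R_i → ℝ with ā_i ∈ A_i, −Σ_{j∈R_i} l_{ij}(m*)·ā_j + u_i(ā) ≤ −t̂_i(m*) + u_i((â_j(m*))_{j∈R_i}). -/

import Mathlib

open Finset

/-- The set `C_j` of users affected by `j`: those `k` with `j ∈ R k`. -/
def affected {N : Type*} [Fintype N] [DecidableEq N] (R : N → Finset N) (j : N) : Finset N :=
  Finset.univ.filter (fun k => j ∈ R k)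

/-- The action `â_j(m)` assigned to user `j` by the mechanism. -/
noncomputable def ahat {N : Type*} [Fintype N] [DecidableEq N] (R : N → Finset N)
    (a : N → N → ℝ) (j : N) : ℝ :=
  (∑ k ∈ affected R j, a k j) / ((affected R j).card : ℝ)

/-- The personalized price `l_{ij}(m)` of user `i` for the action of `j`. -/
def price {N : Type*} (σ : N → N → N) (π : N → N → ℝ) (i j : N) : ℝ :=
  π (σ j i) j - π (σ j (σ j i)) j

/-- The tax `t̂_i(m)` of user `i`. -/
noncomputable def tax {N : Type*} [Fintype N] [DecidableEq N] (R : N → Finset N)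
    (σ : N → N → N) (a π : N → N → ℝ) (i : N) : ℝ :=
  ∑ j ∈ R i,
    (price σ π i j * ahat R a j
      + π i j * (a i j - a (σ j i) j) ^ 2
      - π (σ j i) j * (a (σ j i) j - a (σ j (σ j i)) j) ^ 2)

open Classical in
/-- User `i`'s payoff (valued in `EReal`) at the message profile `(a, π)`. -/
noncomputable def payoff {N : Type*} [Fintype N] [DecidableEq N] (R : N → Finset N)
    (σ : N → N → N) (A : N → Set ℝ) (u : ∀ i : N, (↥(R i) → ℝ) → ℝ)
    (a π : N → N → ℝ) (i : N) : EReal :=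
  if ahat R a i ∈ A i then
    (((- tax R σ a π i + u i fun j => ahat R a j.1) : ℝ) : EReal)
  else ⊥

/-- `(a, π)` is a Nash equilibrium of the game induced by the mechanism and the payoffs. -/
def IsNE {N : Type*} [Fintype N] [DecidableEq N] (R : N → Finset N)
    (σ : N → N → N) (A : N → Set ℝ) (u : ∀ i : N, (↥(R i) → ℝ) → ℝ)
    (a π : N → N → ℝ) : Prop :=
  (∀ i, ∀ j ∈ R i, 0 ≤ π i j) ∧
  ∀ (i : N) (a' π' : N → ℝ), (∀ j ∈ R i, 0 ≤ π' j) →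
    payoff R σ A u (Function.update a i a') (Function.update π i π') i ≤
      payoff R σ A u a π i

/-- Per-user optimality at Nash equilibrium: each user maximizes its
aggregate utility at its equilibrium allocation, given its equilibrium personalized prices. -/
theorem NE_per_user_optimality
    {N : Type*} [Fintype N] [DecidableEq N]
    (R : N → Finset N) (σ : N → N → N)
    (hR : ∀ i, i ∈ R i)
    (hC3 : ∀ j, 3 ≤ (affected R j).card)
    (hσ : ∀ j, Set.BijOn (σ j) ↑(affected R j) ↑(affected R j))
    (hcyc : ∀ j, ∀ x ∈ affected R j, ∀ y ∈ affected R j, ∃ n : ℕ, (σ j)^[n] x = y)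
    (A : N → Set ℝ)
    (hA0 : ∀ i, (0 : ℝ) ∈ A i) (hAconv : ∀ i, Convex ℝ (A i)) (hAcomp : ∀ i, IsCompact (A i))
    (u : ∀ i : N, (↥(R i) → ℝ) → ℝ)
    (hu : ∀ i, ConcaveOn ℝ Set.univ (u i))
    (a π : N → N → ℝ)
    (hNE : IsNE R σ A u a π) :
    ∀ i : N, ∀ abar : ↥(R i) → ℝ, abar ⟨i, hR i⟩ ∈ A i →
      - (∑ j : ↥(R i), price σ π i j.1 * abar j) + u i abar ≤
        - tax R σ a π i + u i (fun j => ahat R a j.1) := by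

  obtain ⟨hπpos, hNE2⟩ := hNE
  intro i abar habar
  -- the deviation action profile
  set a' : N → ℝ := fun j =>
    if h : j ∈ R i then
      ((affected R j).card : ℝ) * abar ⟨j, h⟩ - ∑ k ∈ (affected R j).erase i, a k j
    else 0 with ha'
  set an := Function.update a i a' with han
  set πn := Function.update π i (fun _ => 0) with hπn
  have hmem : ∀ j ∈ R i, i ∈ affected R j := by
    intro j hj; simp [affected, hj]
  have hahat : ∀ j (hj : j ∈ R i), ahat R an j = abar ⟨j, hj⟩ := by
    intro j hj
    have hiC := hmem j hj
    have hcard : ((affected R j).card : ℝ) ≠ 0 := by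
      have := hC3 j; positivity
    have hsum : ∑ k ∈ affected R j, an k j
        = a' j + ∑ k ∈ (affected R j).erase i, a k j := by
      rw [← Finset.add_sum_erase _ _ hiC]
      congr 1
      · simp [han]
      · refine Finset.sum_congr rfl fun k hk => ?_
        have hki : k ≠ i := (Finset.mem_erase.mp hk).1
        simp [han, Function.update_of_ne hki]
    unfold ahat
    rw [hsum]
    simp only [ha', dif_pos hj]
    field_simp
    ring
  -- σ j i and σ j (σ j i) differ from i
  have hσne : ∀ j ∈ R i, σ j i ≠ i ∧ σ j (σ j i) ≠ i := by
    intro j hj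
    have hiC : i ∈ affected R j := hmem j hj
    have h3 := hC3 j
    constructor
    · intro h
      have hiter : ∀ n, (σ j)^[n] i = i := by
        intro n; induction n with
        | zero => rfl
        | succ n ih => rw [Function.iterate_succ_apply', ih, h]
      have h1 : 1 < (affected R j).card := by omega
      obtain ⟨y, hy, hyne⟩ := Finset.exists_mem_ne h1 i
      obtain ⟨n, hn⟩ := hcyc j i hiC y hy
      exact hyne (hn.symm.trans (hiter n))
    · intro h
      have hiter : ∀ n, (σ j)^[n] i = i ∨ (σ j)^[n] i = σ j i := by
        intro n; induction n with
        | zero => exact Or.inl rfl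
        | succ n ih =>
          rcases ih with h1 | h1
          · right; rw [Function.iterate_succ_apply', h1]
          · left; rw [Function.iterate_succ_apply', h1, h]
      have hsub : affected R j ⊆ {i, σ j i} := by
        intro y hy
        obtain ⟨n, hn⟩ := hcyc j i hiC y hy
        rcases hiter n with h1 | h1 <;> simp [← hn, h1]
      have := Finset.card_le_card hsub
      have h2 : ({i, σ j i} : Finset N).card ≤ 2 := by
        apply le_trans (Finset.card_insert_le _ _); simp
      have hfin := this.trans h2
      omega
  -- apply the NE property with the deviation
  have key := hNE2 i a' (fun _ => 0) (fun j _ => le_rfl)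
  rw [← han, ← hπn] at key
  have hpay_new : payoff R σ A u an πn i
      = ((- tax R σ an πn i + u i abar : ℝ) : EReal) := by
    unfold payoff
    rw [if_pos]
    · have : (fun j : ↥(R i) => ahat R an j.1) = abar := by
        funext j; exact hahat j.1 j.2
      rw [this]
    · rw [hahat i (hR i)]; exact habar
  rw [hpay_new] at key
  have hAi : ahat R a i ∈ A i := by
    by_contra hA
    rw [payoff, if_neg hA] at key
    exact (EReal.coe_ne_bot _) (le_bot_iff.mp key)
  rw [payoff, if_pos hAi, EReal.coe_le_coe_iff] at key
  -- bound the deviation tax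
  have htax : tax R σ an πn i ≤ ∑ j ∈ R i, price σ π i j * ahat R an j := by
    unfold tax
    apply Finset.sum_le_sum
    intro j hj
    obtain ⟨h1, h2⟩ := hσne j hj
    have hp : price σ πn i j = price σ π i j := by
      unfold price
      rw [hπn, Function.update_of_ne h1, Function.update_of_ne h2]
    have hπi : πn i j = 0 := by simp [hπn]
    have ha1 : an (σ j i) = a (σ j i) := Function.update_of_ne h1 _ _
    have ha2 : an (σ j (σ j i)) = a (σ j (σ j i)) := Function.update_of_ne h2 _ _
    have hπσ : πn (σ j i) = π (σ j i) := Function.update_of_ne h1 _ _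
    rw [hp, hπi, ha1, ha2, hπσ]
    have hpos : 0 ≤ π (σ j i) j := by
      apply hπpos
      have := (hσ j).mapsTo (hmem j hj)
      simpa [affected] using this
    nlinarith [sq_nonneg (a (σ j i) j - a (σ j (σ j i)) j)]
  have hsum_eq : ∑ j : ↥(R i), price σ π i j.1 * abar j
      = ∑ j ∈ R i, price σ π i j * ahat R an j := by
    rw [Finset.univ_eq_attach,
      ← Finset.sum_attach (R i) (fun j => price σ π i j * ahat R an j)]
    exact Finset.sum_congr rfl fun j _ => by rw [hahat j.1 j.2]
  have : - (∑ j : ↥(R i), price σ π i j.1 * abar j) + u i abar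
      ≤ - tax R σ an πn i + u i abar := by
    rw [hsum_eq]; linarith
  linarith
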